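/- arXiv:1404.5106 — 3 statements merged into one kernel-verified Lean document; each statement's English description precedes it below -/
import Mathlib

section
/- For all natural numbers n and k, the sum over i from 0 to k of C(n+2i, i) equals the alternating sum over j from 0 to floor(k/2) of (-1)^j * C(n+2k-j+1, k-2j), where C(a,b) denotes the binomial coefficient. (Since the right-hand side is an alternating sum, state it over the integers.) -/
private def fAux (m k : ℕ) : ℤ :=
  ∑ j ∈ Finset.range (k / 2 + 1), (-1 : ℤ) ^ j * (Nat.choose (m - j) (k - 2 * j) : ℤ)

private lemma fAux_zero (m : ℕ) : fAux m 0 = 1 := by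
  simp [fAux]

private lemma fAux_one (m : ℕ) : fAux m 1 = (m : ℤ) := by
  simp [fAux]

private lemma fAux_shift (m k : ℕ) :
    fAux (m + 1) (k + 2) = ((m + 1).choose (k + 2) : ℤ) - fAux m k := by
  unfold fAux
  have h : (k + 2) / 2 + 1 = (k / 2 + 1) + 1 := by omega
  rw [h, Finset.sum_range_succ']
  have hterm : ∀ j ∈ Finset.range (k / 2 + 1),
      (-1 : ℤ) ^ (j + 1) * (Nat.choose (m + 1 - (j + 1)) (k + 2 - 2 * (j + 1)) : ℤ)
        = -((-1 : ℤ) ^ j * (Nat.choose (m - j) (k - 2 * j) : ℤ)) := by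
    intro j _
    have h1 : m + 1 - (j + 1) = m - j := by omega
    have h2 : k + 2 - 2 * (j + 1) = k - 2 * j := by omega
    rw [h1, h2]; ring
  rw [Finset.sum_congr rfl hterm, Finset.sum_neg_distrib]
  simp
  ring

private theorem fAux_key : ∀ (k m : ℕ), k ≤ m →
    fAux (m + 2) (k + 1) = fAux m k + ((m + 1).choose (k + 1) : ℤ)
  | 0, m, _ => by
      rw [fAux_zero, fAux_one]
      push_cast [Nat.choose_one_right]
      ring
  | 1, m, _ => by
      have h := fAux_shift (m + 1) 0
      rw [show m + 1 + 1 = m + 2 from rfl] at h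
      rw [h, fAux_zero, fAux_one]
      rw [show m + 2 = (m + 1) + 1 from rfl, Nat.choose_succ_succ (m + 1) 1]
      push_cast [Nat.choose_one_right]
      ring
  | (k + 2), 0, h => by omega
  | (k + 2), (m + 1), h => by
      have ih := fAux_key k m (by omega)
      have s1 := fAux_shift (m + 2) (k + 1)
      have s2 := fAux_shift m k
      rw [show m + 1 + 2 = m + 2 + 1 from rfl, show k + 2 + 1 = k + 1 + 2 from rfl,
        s1, ih, s2]
      have p : (m + 2 + 1).choose (k + 1 + 2)
          = (m + 1).choose (k + 1) + (m + 1).choose (k + 2) + (m + 2).choose (k + 3) := by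
        rw [show m + 2 + 1 = (m + 2) + 1 from rfl, show k + 1 + 2 = (k + 2) + 1 from rfl,
          Nat.choose_succ_succ (m + 2) (k + 2), Nat.choose_succ_succ (m + 1) (k + 1)]
      rw [p]
      push_cast
      ring

theorem hockey_stick_pascal (n k : ℕ) :
    (∑ i ∈ Finset.range (k + 1), (Nat.choose (n + 2 * i) i : ℤ)) =
      ∑ j ∈ Finset.range (k / 2 + 1),
        (-1 : ℤ) ^ j * Nat.choose (n + 2 * k - j + 1) (k - 2 * j) := by
  have e1 : ∀ K : ℕ,
      (∑ j ∈ Finset.range (K / 2 + 1),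
        (-1 : ℤ) ^ j * Nat.choose (n + 2 * K - j + 1) (K - 2 * j)) = fAux (n + 2 * K + 1) K := by
    intro K
    refine Finset.sum_congr rfl fun j hj => ?_
    simp only [Finset.mem_range] at hj
    have : n + 2 * K - j + 1 = n + 2 * K + 1 - j := by omega
    rw [this]
  induction k with
  | zero => simp [fAux]
  | succ k ih =>
      rw [Finset.sum_range_succ, ih, e1 k, e1 (k + 1)]
      have hk := fAux_key k (n + 2 * k + 1) (by omega)
      rw [show n + 2 * (k + 1) + 1 = n + 2 * k + 1 + 2 from by ring, hk,
        show n + 2 * (k + 1) = n + 2 * k + 1 + 1 from by ring]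
end

section
/- For all natural numbers n and k, the sum over i from 0 to k of T(n+i, n) equals the alternating sum over s from 0 to floor(k/2) of (-1)^s * T(n+k+1, n+2s+1), where T(m, j) denotes the trinomial coefficient, i.e., the coefficient of x^(m+j) in the expansion of the polynomial (1 + x + x^2)^m. (Since the right-hand side is an alternating sum, state it over the integers.) -/
/-- The trinomial coefficient `T m j`: the coefficient of `x^(m+j)` in `(1 + x + x^2)^m`
(zero when `m + j < 0`). -/
noncomputable def trinom (m : ℕ) (j : ℤ) : ℤ :=
  if 0 ≤ (m : ℤ) + j then
    ((1 + Polynomial.X + Polynomial.X ^ 2 : Polynomial ℤ) ^ m).coeff ((m : ℤ) + j).toNat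
  else 0

open Polynomial

noncomputable def f (m j : ℕ) : ℤ :=
  ((1 + X + X ^ 2 : Polynomial ℤ) ^ m).coeff (m + j)

lemma f_rec (m j : ℕ) : f (m + 1) (j + 1) = f m j + f m (j + 1) + f m (j + 2) := by
  unfold f
  have : (1 + X + X ^ 2 : Polynomial ℤ) ^ (m + 1)
      = (1 + X + X ^ 2) * (1 + X + X ^ 2) ^ m := by ring
  rw [this]
  set Q := (1 + X + X ^ 2 : Polynomial ℤ) ^ m
  have hN : m + 1 + (j + 1) = (m + j) + 2 := by ring
  rw [hN, add_mul, add_mul, one_mul, coeff_add, coeff_add]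
  have h1 : (X * Q).coeff (m + j + 2) = Q.coeff (m + j + 1) := by
    have := coeff_X_mul Q (m + j + 1); simpa using this
  have h2 : (X ^ 2 * Q).coeff (m + j + 2) = Q.coeff (m + j) := by
    have := coeff_X_pow_mul Q 2 (m + j); simpa [add_comm] using this
  rw [h1, h2]
  have : m + j + 2 = m + (j + 2) := by ring
  rw [this]
  have : m + j + 1 = m + (j + 1) := by ring
  rw [this]
  ring

lemma f_zero (m j : ℕ) (h : m < j) : f m j = 0 := by
  unfold f
  apply coeff_eq_zero_of_natDegree_lt
  calc ((1 + X + X ^ 2 : Polynomial ℤ) ^ m).natDegree ≤ m * (1 + X + X^2 : Polynomial ℤ).natDegree :=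
        natDegree_pow_le
    _ ≤ m * 2 := by
        apply Nat.mul_le_mul_left
        compute_degree
    _ < m + j := by omega

lemma tele (A : ℕ → ℤ) (M : ℕ) :
    ∑ s ∈ Finset.range (M + 1), ((-1 : ℤ) ^ s * (A s + A (s + 1)))
      = A 0 + (-1) ^ M * A (M + 1) := by
  induction M with
  | zero => simp
  | succ M ih => rw [Finset.sum_range_succ, ih, pow_succ]; ring

lemma main (n k : ℕ) :
    (∑ i ∈ Finset.range (k + 1), f (n + i) n) =
      ∑ s ∈ Finset.range (k / 2 + 1), (-1 : ℤ) ^ s * f (n + k + 1) (n + 2 * s + 1) := by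
  induction k with
  | zero =>
    simp only [Nat.zero_add, Nat.zero_div, Finset.sum_range_one, pow_zero, one_mul]
    have h0 : n + 0 + 1 = n + 1 := by ring
    rw [h0]
    have : n + 2 * 0 + 1 = n + 1 := by ring
    rw [this]
    rw [f_rec n n, f_zero n (n+1) (by omega), f_zero n (n+2) (by omega)]
    ring_nf
  | succ k ih =>
    set M := (k + 1) / 2 with hM
    rw [Finset.sum_range_succ, ih]
    have hrec : ∀ s, f (n + (k + 1) + 1) (n + 2 * s + 1)
        = f (n + k + 1) (n + 2 * s) + f (n + k + 1) (n + 2 * s + 1) + f (n + k + 1) (n + 2 * s + 2) := by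
      intro s
      have h1 : n + (k + 1) + 1 = (n + k + 1) + 1 := by ring
      have h2 : n + 2 * s + 1 = (n + 2 * s) + 1 := by ring
      rw [h1, h2]
      exact f_rec (n + k + 1) (n + 2 * s)
    have hsplit :
        ∑ s ∈ Finset.range (M + 1), (-1 : ℤ) ^ s * f (n + (k + 1) + 1) (n + 2 * s + 1)
          = (∑ s ∈ Finset.range (M + 1), (-1 : ℤ) ^ s * (f (n + k + 1) (n + 2 * s) + f (n + k + 1) (n + 2 * (s + 1))))
            + ∑ s ∈ Finset.range (M + 1), (-1 : ℤ) ^ s * f (n + k + 1) (n + 2 * s + 1) := by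
      rw [← Finset.sum_add_distrib]
      apply Finset.sum_congr rfl
      intro s _
      rw [hrec s]
      have : n + 2 * (s + 1) = n + 2 * s + 2 := by ring
      rw [this]; ring
    rw [hsplit, tele (fun s => f (n + k + 1) (n + 2 * s)) M]
    have hnk : n + (k + 1) = n + k + 1 := by ring
    simp only [hnk, Nat.mul_zero, Nat.add_zero]
    rcases Nat.even_or_odd k with ⟨t, ht⟩ | ⟨t, ht⟩
    · have hMt : M = t := by omega
      have hk2 : k / 2 = t := by omega
      rw [hMt, hk2, f_zero (n + k + 1) (n + 2 * (t + 1)) (by omega)]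
      ring
    · have hMt : M = t + 1 := by omega
      have hk2 : k / 2 = t := by omega
      rw [hMt, hk2]
      have hB : ∑ s ∈ Finset.range (t + 1 + 1), (-1 : ℤ) ^ s * f (n + k + 1) (n + 2 * s + 1)
          = (∑ s ∈ Finset.range (t + 1), (-1 : ℤ) ^ s * f (n + k + 1) (n + 2 * s + 1))
            + (-1) ^ (t + 1) * f (n + k + 1) (n + 2 * (t + 1) + 1) :=
        Finset.sum_range_succ _ _
      rw [hB, f_zero (n + k + 1) (n + 2 * (t + 1) + 1) (by omega),
          f_zero (n + k + 1) (n + 2 * (t + 1 + 1)) (by omega)]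
      ring

lemma trinom_nat (m j : ℕ) : trinom m (j : ℤ) = f m j := by
  unfold trinom f
  rw [if_pos (by positivity)]
  congr 1

theorem hockey_stick_trinomial (n k : ℕ) :
    (∑ i ∈ Finset.range (k + 1), trinom (n + i) (n : ℤ)) =
      ∑ s ∈ Finset.range (k / 2 + 1),
        (-1 : ℤ) ^ s * trinom (n + k + 1) ((n : ℤ) + 2 * s + 1) := by
  rw [show (∑ i ∈ Finset.range (k + 1), trinom (n + i) (n : ℤ))
        = ∑ i ∈ Finset.range (k + 1), f (n + i) n from
      Finset.sum_congr rfl fun i _ => trinom_nat _ _, main n k]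
  refine Finset.sum_congr rfl fun s _ => ?_
  congr 1
end

section
/- For all natural numbers n and k, the sum over i from 0 to k of [ the sum over all pairs of natural numbers (r, s) with 2r + s = 2n + i and r ≥ n of the multinomial coefficient (n+i)! / (r! · s! · (r-n)!) ] equals the alternating sum over j from 0 to floor(k/2) of (-1)^j times [ the sum over all pairs of natural numbers (r, s) with 2r + s = 2n + k + 2j + 2 and r ≥ n + 2j + 1 of the multinomial coefficient (n+k+1)! / (r! · s! · (r-n-2j-1)!) ]. (Since the right-hand side is an alternating sum, state it over the integers.) -/
open Polynomial Finset

noncomputable def TT (m a : ℕ) : ℕ := (((1 + X + X ^ 2 : ℕ[X])) ^ m).coeff (m + a)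

lemma TT_eq_zero {m a : ℕ} (h : m < a) : TT m a = 0 := by
  apply Polynomial.coeff_eq_zero_of_natDegree_lt
  calc ((1 + X + X ^ 2 : ℕ[X]) ^ m).natDegree ≤ m * (1 + X + X ^ 2 : ℕ[X]).natDegree :=
        Polynomial.natDegree_pow_le
    _ ≤ m * 2 := by
        gcongr
        calc (1 + X + X ^ 2 : ℕ[X]).natDegree
            ≤ max (1 + X : ℕ[X]).natDegree (X ^ 2 : ℕ[X]).natDegree := natDegree_add_le _ _
          _ ≤ 2 := by
              simp [natDegree_X_pow]
              calc (1 + X : ℕ[X]).natDegree ≤ max (1:ℕ[X]).natDegree (X:ℕ[X]).natDegree :=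
                natDegree_add_le _ _
                _ ≤ 2 := by simp
    _ < m + a := by omega

lemma TT_rec (m a : ℕ) : TT (m + 1) (a + 1) = TT m a + TT m (a + 1) + TT m (a + 2) := by
  unfold TT
  rw [pow_succ, mul_comm]
  have h1 : ((1 : ℕ[X]) + X + X ^ 2) * (1 + X + X ^ 2 : ℕ[X]) ^ m
      = (1 + X + X ^ 2 : ℕ[X]) ^ m + X * (1 + X + X ^ 2 : ℕ[X]) ^ m
        + X ^ 2 * (1 + X + X ^ 2 : ℕ[X]) ^ m := by ring
  rw [h1]
  have e1 : m + 1 + (a + 1) = (m + a + 1) + 1 := by ring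
  have e2 : m + 1 + (a + 1) = (m + a) + 2 := by ring
  rw [coeff_add, coeff_add]
  rw [e1, coeff_X_mul]
  have := Polynomial.coeff_X_pow_mul ((1 + X + X ^ 2 : ℕ[X]) ^ m) 2 (m + a)
  rw [show (m + a + 1 + 1) = m + a + 2 from rfl] at *
  rw [this]
  ring_nf

lemma multinomial_eq' (u s t : ℕ) :
    (u + s + t).factorial / (u.factorial * s.factorial * t.factorial)
      = (u + s + t).choose u * (s + t).choose s := by
  apply Nat.div_eq_of_eq_mul_left
  · positivity
  · have h1 : (u + s + t).choose u * u.factorial * (s + t).factorial = (u + s + t).factorial :=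
      by
        have := Nat.choose_mul_factorial_mul_factorial (n := u + s + t) (k := u) (by omega)
        simpa [show u + s + t - u = s + t by omega] using this
    have h2 : (s + t).choose s * s.factorial * t.factorial = (s + t).factorial := by
      have := Nat.choose_mul_factorial_mul_factorial (n := s + t) (k := s) (by omega)
      simpa [show s + t - s = t by omega] using this
    calc (u + s + t).factorial = (u + s + t).choose u * u.factorial * (s + t).factorial :=
        h1.symm
      _ = (u + s + t).choose u * u.factorial * ((s + t).choose s * s.factorial * t.factorial) := by
        rw [h2]
      _ = (u + s + t).choose u * (s + t).choose s * (u.factorial * s.factorial * t.factorial) := by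
        ring

lemma TT_eq_choose_sum (m a : ℕ) :
    TT m a = ∑ r ∈ Finset.range (m + 1),
      (if 2 * r ≤ m + a then (m - r).choose (m + a - 2 * r) else 0) * m.choose r := by
  unfold TT
  have hP : (1 + X + X ^ 2 : ℕ[X]) = X ^ 2 + (1 + X) := by ring
  rw [hP, add_pow, finset_sum_coeff]
  refine Finset.sum_congr rfl fun r hr => ?_
  rw [← Polynomial.C_eq_natCast, coeff_mul_C, ← pow_mul,
    mul_comm ((X : ℕ[X]) ^ (2 * r)) _, coeff_mul_X_pow']
  split_ifs with h
  · rw [coeff_one_add_X_pow]; push_cast; ring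
  · simp

lemma TT_eq_sum (m a : ℕ) :
    TT m a = ∑ p ∈ (Finset.range (m + a + 1) ×ˢ Finset.range (m + a + 1)).filter
        (fun p => 2 * p.1 + p.2 = m + a ∧ a ≤ p.1),
      m.factorial / (p.1.factorial * p.2.factorial * (p.1 - a).factorial) := by
  set N := m + a with hN
  rw [TT_eq_choose_sum]
  rw [Finset.sum_filter, Finset.sum_product]
  rw [Finset.sum_subset (Finset.range_subset_range.2 (by omega : m + 1 ≤ N + 1))
    (fun r _ hr => by
      have : m < r := by simpa using hr
      simp [Nat.choose_eq_zero_of_lt this])]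
  refine Finset.sum_congr rfl fun r hr => ?_
  have hinner : (∑ s ∈ Finset.range (N + 1),
      if 2 * r + s = N ∧ a ≤ r then
        m.factorial / (r.factorial * s.factorial * (r - a).factorial) else 0)
      = if 2 * r + (N - 2 * r) = N ∧ a ≤ r then
        m.factorial / (r.factorial * (N - 2 * r).factorial * (r - a).factorial) else 0 := by
    refine Finset.sum_eq_single_of_mem (N - 2 * r) (by simp) fun s _ hs => ?_
    rw [if_neg]
    rintro ⟨h1, -⟩
    exact hs (by omega)
  rw [eq_comm, hinner]
  by_cases h1 : 2 * r ≤ N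
  · have hc : (2 * r + (N - 2 * r) = N) := by omega
    by_cases h2 : a ≤ r
    · rw [if_pos ⟨hc, h2⟩, if_pos h1]
      have hu : r + (N - 2 * r) + (r - a) = m := by omega
      have hst : (N - 2 * r) + (r - a) = m - r := by omega
      have := multinomial_eq' r (N - 2 * r) (r - a)
      rw [hu, hst] at this
      rw [this, mul_comm]
    · rw [if_neg (by tauto), if_pos h1]
      rcases le_or_gt r m with h | h
      · have : (m - r).choose (N - 2 * r) = 0 := Nat.choose_eq_zero_of_lt (by omega)
        simp [← hN, this]
      · simp [Nat.choose_eq_zero_of_lt h]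
  · rw [if_neg (by omega : ¬(2 * r + (N - 2 * r) = N ∧ a ≤ r)), if_neg h1, zero_mul]

lemma key (n k : ℕ) :
    (∑ i ∈ Finset.range (k + 1), (TT (n + i) n : ℤ))
      = ∑ j ∈ Finset.range (k + 1), (-1 : ℤ) ^ j * TT (n + k + 1) (n + 2 * j + 1) := by
  induction k with
  | zero =>
    simp only [zero_add, Finset.sum_range_one, Nat.add_zero, Nat.mul_zero]
    rw [TT_rec n n]
    rw [TT_eq_zero (by omega : n < n + 1), TT_eq_zero (by omega : n < n + 2)]
    push_cast
    ring
  | succ k ih =>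
    rw [Finset.sum_range_succ, ih]
    have hsplit : ∀ j ∈ Finset.range (k + 2), ((-1 : ℤ) ^ j * TT (n + (k + 1) + 1) (n + 2 * j + 1))
        = (((-1 : ℤ) ^ j * TT (n + k + 1) (n + 2 * j)
            - (-1 : ℤ) ^ (j + 1) * TT (n + k + 1) (n + 2 * (j + 1)))
          + (-1 : ℤ) ^ j * TT (n + k + 1) (n + 2 * j + 1)) := by
      intro j _
      rw [show n + (k + 1) + 1 = (n + k + 1) + 1 from rfl,
        show n + 2 * j + 1 = (n + 2 * j) + 1 from rfl, TT_rec,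
        show n + 2 * (j + 1) = (n + 2 * j) + 2 by ring]
      push_cast [pow_succ]
      ring
    rw [Finset.sum_congr rfl hsplit, Finset.sum_add_distrib,
      Finset.sum_range_sub' (fun j => (-1 : ℤ) ^ j * TT (n + k + 1) (n + 2 * j)),
      Finset.sum_range_succ (fun j => (-1 : ℤ) ^ j * TT (n + k + 1) (n + 2 * j + 1)) (k + 1)]
    rw [TT_eq_zero (by omega : n + k + 1 < n + 2 * (k + 2)),
      TT_eq_zero (by omega : n + k + 1 < n + 2 * (k + 1) + 1)]
    rw [show n + (k + 1) = n + k + 1 from rfl, show n + 2 * 0 = n from rfl]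
    push_cast
    ring

theorem hockey_stick_pascal_pyramid (n k : ℕ) :
    (∑ i ∈ Finset.range (k + 1),
        ∑ p ∈ (Finset.range (2 * n + i + 1) ×ˢ Finset.range (2 * n + i + 1)).filter
            (fun p => 2 * p.1 + p.2 = 2 * n + i ∧ n ≤ p.1),
          ((n + i).factorial / (p.1.factorial * p.2.factorial * (p.1 - n).factorial) : ℤ)) =
      ∑ j ∈ Finset.range (k / 2 + 1),
        (-1 : ℤ) ^ j *
          ∑ p ∈ (Finset.range (2 * n + k + 2 * j + 3) ×ˢ Finset.range (2 * n + k + 2 * j + 3)).filter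
              (fun p => 2 * p.1 + p.2 = 2 * n + k + 2 * j + 2 ∧ n + 2 * j + 1 ≤ p.1),
            ((n + k + 1).factorial /
              (p.1.factorial * p.2.factorial * (p.1 - (n + 2 * j + 1)).factorial) : ℤ) := by
  have hL : ∀ i : ℕ,
      (∑ p ∈ (Finset.range (2 * n + i + 1) ×ˢ Finset.range (2 * n + i + 1)).filter
          (fun p => 2 * p.1 + p.2 = 2 * n + i ∧ n ≤ p.1),
        ((n + i).factorial / (p.1.factorial * p.2.factorial * (p.1 - n).factorial) : ℤ))
      = (TT (n + i) n : ℤ) := by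
    intro i
    have h := TT_eq_sum (n + i) n
    rw [show n + i + n = 2 * n + i by ring] at h
    rw [h]
    push_cast [Int.natCast_div]
    rfl
  have hR : ∀ j : ℕ,
      (∑ p ∈ (Finset.range (2 * n + k + 2 * j + 3) ×ˢ
            Finset.range (2 * n + k + 2 * j + 3)).filter
          (fun p => 2 * p.1 + p.2 = 2 * n + k + 2 * j + 2 ∧ n + 2 * j + 1 ≤ p.1),
        ((n + k + 1).factorial /
          (p.1.factorial * p.2.factorial * (p.1 - (n + 2 * j + 1)).factorial) : ℤ))
      = (TT (n + k + 1) (n + 2 * j + 1) : ℤ) := by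
    intro j
    have h := TT_eq_sum (n + k + 1) (n + 2 * j + 1)
    rw [show n + k + 1 + (n + 2 * j + 1) = 2 * n + k + 2 * j + 2 by ring] at h
    rw [h]
    push_cast [Int.natCast_div]
    rfl
  calc (∑ i ∈ Finset.range (k + 1), _) = ∑ i ∈ Finset.range (k + 1), (TT (n + i) n : ℤ) :=
        Finset.sum_congr rfl fun i _ => hL i
    _ = ∑ j ∈ Finset.range (k + 1), (-1 : ℤ) ^ j * TT (n + k + 1) (n + 2 * j + 1) := key n k
    _ = ∑ j ∈ Finset.range (k / 2 + 1), (-1 : ℤ) ^ j * TT (n + k + 1) (n + 2 * j + 1) := by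
        refine (Finset.sum_subset (Finset.range_subset_range.2 (by omega)) fun j _ hj => ?_).symm
        have hj' : k / 2 + 1 ≤ j := by simpa using hj
        rw [TT_eq_zero (by omega : n + k + 1 < n + 2 * j + 1)]
        simp
    _ = _ := Finset.sum_congr rfl fun j _ => ((hR j).symm ▸ rfl)
end
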